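/- In Z[x,y,z,k] localized at 2 (or over Q), the resultant Res_y(Res_z(F, F_z), Res_z(F_y, F_z)) of F(x,y,z) = x² + y² + z² + x²y²z² + k·x·y·z equals 2¹²·k⁸·x²⁶·(2x² - kx - 2)²·(2x² - kx + 2)²·(2x² + kx - 2)²·(2x² + kx + 2)². -/

import Mathlib

open Polynomial

/-- The Sylvester matrix of `f` and `g`, regarded as polynomials of degree
(at most) `m` and `n` respectively: the first `n` rows are the coefficient
vectors of `X^i * f` for `0 ≤ i < n` and the last `m` rows are the coefficient
vectors of `X^i * g` for `0 ≤ i < m`, all with respect to the monomial basis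
`1, X, …, X^(m+n-1)`. -/
def sylvester {R : Type*} [CommRing R] (f g : Polynomial R) (m n : ℕ) :
    Matrix (Fin (n + m)) (Fin (n + m)) R :=
  Matrix.of fun i j =>
    if (i : ℕ) < n then
      (if (i : ℕ) ≤ (j : ℕ) then f.coeff ((j : ℕ) - (i : ℕ)) else 0)
    else
      (if (i : ℕ) - n ≤ (j : ℕ) then g.coeff ((j : ℕ) - ((i : ℕ) - n)) else 0)

/-- The resultant of `f` and `g` (of degrees `m` and `n`), as the determinant
of their Sylvester matrix. -/
def resultant {R : Type*} [CommRing R] (f g : Polynomial R) (m n : ℕ) : R :=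
  (_root_.sylvester f g m n).det

noncomputable section

/-- The base ring `ℚ[x,k]`. -/
abbrev R2 : Type := MvPolynomial (Fin 2) ℚ

/-- The variable `x`. -/
def xv : R2 := MvPolynomial.X 0

/-- The variable `k`. -/
def kv : R2 := MvPolynomial.X 1

/-- `F = x² + y² + z² + x²y²z² + kxyz` as a polynomial in `z` (outer variable)
with coefficients polynomials in `y` (inner variable) over `ℚ[x,k]`:
`F = (1 + x²y²) z² + (kxy) z + (x² + y²)`. -/
def FF : Polynomial (Polynomial R2) :=
  C (1 + C (xv ^ 2) * X ^ 2) * X ^ 2 + C (C (kv * xv) * X) * X +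
    C (C (xv ^ 2) + X ^ 2)

/-- `F_z = 2(1 + x²y²) z + kxy`. -/
def FFz : Polynomial (Polynomial R2) :=
  C (2 * (1 + C (xv ^ 2) * X ^ 2)) * X + C (C (kv * xv) * X)

/-- `F_y = (2x²y) z² + (kx) z + 2y`. -/
def FFy : Polynomial (Polynomial R2) :=
  C (C (2 * xv ^ 2) * X) * X ^ 2 + C (C (kv * xv)) * X + C (2 * X)

/-! ### Auxiliary material for the proof -/

/-- `Res_z(F, F_z)` as an explicit polynomial in `y`. -/
def f6 : Polynomial R2 :=
  C (4*xv^2) + C (4 - kv^2*xv^2 + 8*xv^4) * X^2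
    + C (8*xv^2 - kv^2*xv^4 + 4*xv^6) * X^4 + C (4*xv^4) * X^6

/-- `Res_z(F_y, F_z)` as an explicit polynomial in `y`. -/
def g5 : Polynomial R2 :=
  C (8 - 2*kv^2*xv^2) * X + C (16*xv^2) * X^3 + C (8*xv^4) * X^5

/-- Generic description of the 3×3 Sylvester matrix for degrees (2,1). -/
lemma sylvester_two_one {R : Type*} [CommRing R] (f g : Polynomial R) :
    _root_.sylvester f g 2 1 = Matrix.of ![![f.coeff 0, f.coeff 1, f.coeff 2],
      ![g.coeff 0, g.coeff 1, g.coeff 2], ![0, g.coeff 0, g.coeff 1]] := by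
  ext i j : 2; fin_cases i <;> fin_cases j <;> rfl

lemma res1 : _root_.resultant FF FFz 2 1 = f6 := by
  rw [_root_.resultant, sylvester_two_one, Matrix.det_fin_three]
  simp only [Matrix.cons_val', Matrix.cons_val_zero, Matrix.cons_val_one, Matrix.head_cons,
    Matrix.empty_val', Matrix.cons_val_fin_one, Matrix.head_fin_const, Matrix.of_apply,
    Matrix.cons_val_two, Matrix.tail_cons]
  simp only [FF, FFz, coeff_add, coeff_C_mul, coeff_X_pow, coeff_X, coeff_mul_X, coeff_C]
  norm_num [f6]
  simp only [C_add, C_mul, C_pow, C_sub, map_ofNat, C_1]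
  ring

lemma res2 : _root_.resultant FFy FFz 2 1 = g5 := by
  rw [_root_.resultant, sylvester_two_one, Matrix.det_fin_three]
  simp only [Matrix.cons_val', Matrix.cons_val_zero, Matrix.cons_val_one, Matrix.head_cons,
    Matrix.empty_val', Matrix.cons_val_fin_one, Matrix.head_fin_const, Matrix.of_apply,
    Matrix.cons_val_two, Matrix.tail_cons]
  simp only [FFy, FFz, coeff_add, coeff_C_mul, coeff_X_pow, coeff_X, coeff_mul_X, coeff_C]
  norm_num [g5]
  simp only [C_add, C_mul, C_pow, C_sub, map_ofNat, C_1]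
  ring

lemma cf0 : f6.coeff 0 = 4*xv^2 := by
  simp only [f6, coeff_add, coeff_C_mul, coeff_X_pow, coeff_X, coeff_C]; norm_num
lemma cf1 : f6.coeff 1 = 0 := by
  simp only [f6, coeff_add, coeff_C_mul, coeff_X_pow, coeff_X, coeff_C]; norm_num
lemma cf2 : f6.coeff 2 = 4 - kv^2*xv^2 + 8*xv^4 := by
  simp only [f6, coeff_add, coeff_C_mul, coeff_X_pow, coeff_X, coeff_C]; norm_num
lemma cf3 : f6.coeff 3 = 0 := by
  simp only [f6, coeff_add, coeff_C_mul, coeff_X_pow, coeff_X, coeff_C]; norm_num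
lemma cf4 : f6.coeff 4 = 8*xv^2 - kv^2*xv^4 + 4*xv^6 := by
  simp only [f6, coeff_add, coeff_C_mul, coeff_X_pow, coeff_X, coeff_C]; norm_num
lemma cf5 : f6.coeff 5 = 0 := by
  simp only [f6, coeff_add, coeff_C_mul, coeff_X_pow, coeff_X, coeff_C]; norm_num
lemma cf6 : f6.coeff 6 = 4*xv^4 := by
  simp only [f6, coeff_add, coeff_C_mul, coeff_X_pow, coeff_X, coeff_C]; norm_num
lemma cf7 : f6.coeff 7 = 0 := by
  simp only [f6, coeff_add, coeff_C_mul, coeff_X_pow, coeff_X, coeff_C]; norm_num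
lemma cf8 : f6.coeff 8 = 0 := by
  simp only [f6, coeff_add, coeff_C_mul, coeff_X_pow, coeff_X, coeff_C]; norm_num
lemma cf9 : f6.coeff 9 = 0 := by
  simp only [f6, coeff_add, coeff_C_mul, coeff_X_pow, coeff_X, coeff_C]; norm_num
lemma cf10 : f6.coeff 10 = 0 := by
  simp only [f6, coeff_add, coeff_C_mul, coeff_X_pow, coeff_X, coeff_C]; norm_num
lemma cg0 : g5.coeff 0 = 0 := by
  simp only [g5, coeff_add, coeff_C_mul, coeff_X_pow, coeff_X, coeff_C]; norm_num
lemma cg1 : g5.coeff 1 = 8 - 2*kv^2*xv^2 := by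
  simp only [g5, coeff_add, coeff_C_mul, coeff_X_pow, coeff_X, coeff_C]; norm_num
lemma cg2 : g5.coeff 2 = 0 := by
  simp only [g5, coeff_add, coeff_C_mul, coeff_X_pow, coeff_X, coeff_C]; norm_num
lemma cg3 : g5.coeff 3 = 16*xv^2 := by
  simp only [g5, coeff_add, coeff_C_mul, coeff_X_pow, coeff_X, coeff_C]; norm_num
lemma cg4 : g5.coeff 4 = 0 := by
  simp only [g5, coeff_add, coeff_C_mul, coeff_X_pow, coeff_X, coeff_C]; norm_num
lemma cg5 : g5.coeff 5 = 8*xv^4 := by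
  simp only [g5, coeff_add, coeff_C_mul, coeff_X_pow, coeff_X, coeff_C]; norm_num
lemma cg6 : g5.coeff 6 = 0 := by
  simp only [g5, coeff_add, coeff_C_mul, coeff_X_pow, coeff_X, coeff_C]; norm_num
lemma cg7 : g5.coeff 7 = 0 := by
  simp only [g5, coeff_add, coeff_C_mul, coeff_X_pow, coeff_X, coeff_C]; norm_num
lemma cg8 : g5.coeff 8 = 0 := by
  simp only [g5, coeff_add, coeff_C_mul, coeff_X_pow, coeff_X, coeff_C]; norm_num
lemma cg9 : g5.coeff 9 = 0 := by
  simp only [g5, coeff_add, coeff_C_mul, coeff_X_pow, coeff_X, coeff_C]; norm_num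
lemma cg10 : g5.coeff 10 = 0 := by
  simp only [g5, coeff_add, coeff_C_mul, coeff_X_pow, coeff_X, coeff_C]; norm_num

/-- The even/odd interleaving equivalence `Fin 6 ⊕ Fin 5 ≃ Fin 11`. -/
def eOE : Fin 6 ⊕ Fin 5 ≃ Fin 11 where
  toFun := Sum.elim ![0,2,4,6,8,10] ![1,3,5,7,9]
  invFun := ![Sum.inl 0, Sum.inr 0, Sum.inl 1, Sum.inr 1, Sum.inl 2, Sum.inr 2,
    Sum.inl 3, Sum.inr 3, Sum.inl 4, Sum.inr 4, Sum.inl 5]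
  left_inv := by rintro (i|i) <;> fin_cases i <;> rfl
  right_inv := by intro i; fin_cases i <;> rfl

/-- The even-index block of the Sylvester matrix of `f6` and `g5`. -/
def AM : Matrix (Fin 6) (Fin 6) R2 :=
  !![f6.coeff 0, f6.coeff 2, f6.coeff 4, f6.coeff 6, f6.coeff 8, f6.coeff 10;
     0, f6.coeff 0, f6.coeff 2, f6.coeff 4, f6.coeff 6, f6.coeff 8;
     0, 0, f6.coeff 0, f6.coeff 2, f6.coeff 4, f6.coeff 6;
     0, g5.coeff 1, g5.coeff 3, g5.coeff 5, g5.coeff 7, g5.coeff 9;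
     0, 0, g5.coeff 1, g5.coeff 3, g5.coeff 5, g5.coeff 7;
     0, 0, 0, g5.coeff 1, g5.coeff 3, g5.coeff 5]

/-- The odd-index block of the Sylvester matrix of `f6` and `g5`. -/
def BM : Matrix (Fin 5) (Fin 5) R2 :=
  !![f6.coeff 0, f6.coeff 2, f6.coeff 4, f6.coeff 6, f6.coeff 8;
     0, f6.coeff 0, f6.coeff 2, f6.coeff 4, f6.coeff 6;
     g5.coeff 1, g5.coeff 3, g5.coeff 5, g5.coeff 7, g5.coeff 9;
     0, g5.coeff 1, g5.coeff 3, g5.coeff 5, g5.coeff 7;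
     0, 0, g5.coeff 1, g5.coeff 3, g5.coeff 5]

set_option maxRecDepth 10000 in
set_option maxHeartbeats 4000000 in
lemma hsplit : _root_.resultant f6 g5 6 5 = AM.det * BM.det := by
  have h := Matrix.det_fromBlocks_zero₂₁ AM (0 : Matrix (Fin 6) (Fin 5) R2) BM
  rw [_root_.resultant, ← Matrix.det_submatrix_equiv_self eOE, ← h]
  congr 1
  apply Matrix.ext
  rintro (i|i) (j|j) <;> fin_cases i <;> fin_cases j <;>
    simp [_root_.sylvester, eOE, AM, BM, cf1, cf3, cf5, cf7, cf9, cg0, cg2, cg4, cg6, cg8, cg10]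

set_option maxRecDepth 10000 in
set_option maxHeartbeats 4000000 in
lemma hdetA : AM.det = 2048*xv^14*kv^4 - 1024*xv^16*kv^6 - 4096*xv^18*kv^4
    + 128*xv^18*kv^8 - 1024*xv^20*kv^6 + 2048*xv^22*kv^4 := by
  simp only [AM, cf0, cf2, cf4, cf6, cf8, cf10, cg1, cg3, cg5, cg7, cg9]
  simp [Matrix.det_succ_row_zero, Fin.sum_univ_succ, Fin.succAbove, Fin.ext_iff,
    Fin.castSucc, Fin.castAdd, Fin.castLE]
  ring

set_option maxRecDepth 10000 in
set_option maxHeartbeats 4000000 in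
lemma hdetB : BM.det = 512*xv^12*kv^4 - 256*xv^14*kv^6 - 1024*xv^16*kv^4
    + 32*xv^16*kv^8 - 256*xv^18*kv^6 + 512*xv^20*kv^4 := by
  simp only [BM, cf0, cf2, cf4, cf6, cf8, cf10, cg1, cg3, cg5, cg7, cg9]
  simp [Matrix.det_succ_row_zero, Fin.sum_univ_succ, Fin.succAbove, Fin.ext_iff,
    Fin.castSucc, Fin.castAdd, Fin.castLE]
  ring

/-- `Res_y(Res_z(F, F_z), Res_z(F_y, F_z))
  = 2¹² k⁸ x²⁶ (2x² - kx - 2)² (2x² - kx + 2)² (2x² + kx - 2)² (2x² + kx + 2)²`. -/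
theorem stmt_17 :
    _root_.resultant (_root_.resultant FF FFz 2 1) (_root_.resultant FFy FFz 2 1) 6 5 =
      2 ^ 12 * kv ^ 8 * xv ^ 26 * (2 * xv ^ 2 - kv * xv - 2) ^ 2 *
        (2 * xv ^ 2 - kv * xv + 2) ^ 2 * (2 * xv ^ 2 + kv * xv - 2) ^ 2 *
        (2 * xv ^ 2 + kv * xv + 2) ^ 2 := by
  rw [res1, res2, hsplit, hdetA, hdetB]
  ring

end
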